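/- Janson's second correlation inequality: let I be a finite set and let (ξ_i)_{i∈I} be independent random variables with values in {0,1} on a probability space. Let Ω be a finite family of nonempty subsets of I, and for ω ∈ Ω let E_ω be the event {ξ_i = 1 for all i ∈ ω}. Assume P(E_ω) ≤ 1/2 for every ω ∈ Ω. Then P(⋂_{ω∈Ω} E_ω^c) ≤ (∏_{ω∈Ω} P(E_ω^c)) · exp(2·Σ P(E_ω ∩ E_ω')), where the sum runs over all ordered pairs (ω, ω') of elements of Ω with ω ≠ ω' and ω ∩ ω' ≠ ∅. -/

import Mathlib

open MeasureTheory ProbabilityTheory Finset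

set_option linter.unusedSectionVars false
set_option linter.unusedVariables false



open Finset

namespace JansonAux

variable {I : Type*} [Fintype I] [DecidableEq I] (q : I → Bool → ℝ)

/-- product weight -/
def wt (a : I → Bool) : ℝ := ∏ i, q i (a i)

/-- probability of a finite set of configurations -/
def PP (A : Finset (I → Bool)) : ℝ := ∑ a ∈ A, wt q a

/-- the event `{∀ i ∈ ω, a i = true}` -/
def UP (ω : Finset I) : Finset (I → Bool) :=
  Finset.univ.filter (fun a => ∀ i ∈ ω, a i = true)

/-- intersection of complements -/
def CF (S : Finset (Finset I)) : Finset (I → Bool) :=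
  Finset.univ.filter (fun a => ∀ ω ∈ S, ¬ (∀ i ∈ ω, a i = true))

variable {q}

lemma wt_nonneg (hq0 : ∀ i b, 0 ≤ q i b) (a : I → Bool) : 0 ≤ wt q a :=
  Finset.prod_nonneg fun i _ => hq0 i (a i)

lemma PP_nonneg (hq0 : ∀ i b, 0 ≤ q i b) (A : Finset (I → Bool)) : 0 ≤ PP q A :=
  Finset.sum_nonneg fun a _ => wt_nonneg hq0 a

lemma PP_mono (hq0 : ∀ i b, 0 ≤ q i b) {A B : Finset (I → Bool)} (h : A ⊆ B) :
    PP q A ≤ PP q B :=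
  Finset.sum_le_sum_of_subset_of_nonneg h fun a _ _ => wt_nonneg hq0 a

lemma PP_le_one (hq0 : ∀ i b, 0 ≤ q i b) (hw1 : ∑ a, wt q a = 1) (A : Finset (I → Bool)) :
    PP q A ≤ 1 := by
  rw [← hw1]
  exact PP_mono hq0 (subset_univ A)

lemma wt_lattice (a b : I → Bool) : wt q (a ⊓ b) * wt q (a ⊔ b) = wt q a * wt q b := by
  unfold wt
  rw [← Finset.prod_mul_distrib, ← Finset.prod_mul_distrib]
  refine Finset.prod_congr rfl fun i _ => ?_
  rcases le_total (a i) (b i) with h | h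
  · rw [Pi.inf_apply, Pi.sup_apply, inf_eq_left.2 h, sup_eq_right.2 h]
  · rw [Pi.inf_apply, Pi.sup_apply, inf_eq_right.2 h, sup_eq_left.2 h, mul_comm]

lemma PP_eq_sum_ind (A : Finset (I → Bool)) :
    PP q A = ∑ a, wt q a * (if a ∈ A then 1 else 0) := by
  unfold PP
  simp only [mul_ite, mul_one, mul_zero, Finset.sum_ite_mem, univ_inter]

end JansonAux

section part2
namespace JansonAux
variable {I : Type*} [Fintype I] [DecidableEq I] {q : I → Bool → ℝ}

lemma harris (hq0 : ∀ i b, 0 ≤ q i b) (hw1 : ∑ a, wt q a = 1)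
    (A B : Finset (I → Bool))
    (hA : ∀ ⦃a b : I → Bool⦄, a ≤ b → a ∈ A → b ∈ A)
    (hB : ∀ ⦃a b : I → Bool⦄, a ≤ b → b ∈ B → a ∈ B) :
    PP q (A ∩ B) ≤ PP q A * PP q B := by
  set f : (I → Bool) → ℝ := fun a => if a ∈ A then 1 else 0 with hf
  set g : (I → Bool) → ℝ := fun a => if a ∈ B then 0 else 1 with hg
  have hf0 : (0 : (I → Bool) → ℝ) ≤ f := fun a => by dsimp [f]; positivity
  have hg0 : (0 : (I → Bool) → ℝ) ≤ g := fun a => by dsimp [g]; positivity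
  have hfm : Monotone f := by
    intro a b hab
    dsimp [f]
    by_cases h : a ∈ A
    · simp [h, hA hab h]
    · simp only [h, if_false]
      positivity
  have hgm : Monotone g := by
    intro a b hab
    dsimp [g]
    by_cases h : b ∈ B
    · simp [h, hB hab h]
    · simp only [h, if_false]
      split <;> norm_num
  have hkey := fkg (μ := wt q) (f := f) (g := g) (fun a => wt_nonneg hq0 a) hf0 hg0 hfm hgm
    (fun a b => le_of_eq (wt_lattice a b).symm)
  have e1 : ∑ a, wt q a * f a = PP q A := (PP_eq_sum_ind A).symm
  have e2 : ∑ a, wt q a * g a = 1 - PP q B := by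
    have : ∀ a : I → Bool, wt q a * g a = wt q a - wt q a * (if a ∈ B then 1 else 0) := by
      intro a
      dsimp [g]
      by_cases h : a ∈ B <;> simp [h]
    rw [Finset.sum_congr rfl fun a _ => this a, Finset.sum_sub_distrib, hw1,
      ← PP_eq_sum_ind]
  have e3 : ∑ a, wt q a * (f a * g a) = PP q A - PP q (A ∩ B) := by
    have : ∀ a : I → Bool, wt q a * (f a * g a) =
        wt q a * (if a ∈ A then 1 else 0) - wt q a * (if a ∈ A ∩ B then 1 else 0) := by
      intro a
      dsimp [f, g]
      by_cases h1 : a ∈ A <;> by_cases h2 : a ∈ B <;> simp [h1, h2, Finset.mem_inter]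
    rw [Finset.sum_congr rfl fun a _ => this a, Finset.sum_sub_distrib,
      ← PP_eq_sum_ind, ← PP_eq_sum_ind]
  rw [e1, e2, hw1, e3] at hkey
  nlinarith [hkey]

end JansonAux
end part2

section part3
namespace JansonAux
variable {I : Type*} [Fintype I] [DecidableEq I] {q : I → Bool → ℝ}

/-- merge of two configurations along `s` -/
def mg (s : Finset I) (a b : I → Bool) : I → Bool := fun i => if i ∈ s then a i else b i

lemma factor (s : Finset I) (f g : (I → Bool) → ℝ)
    (hf : ∀ a b : I → Bool, (∀ i ∈ s, a i = b i) → f a = f b)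
    (hg : ∀ a b : I → Bool, (∀ i ∉ s, a i = b i) → g a = g b)
    (hw1 : ∑ a, wt q a = 1) :
    (∑ a, wt q a * f a) * (∑ a, wt q a * g a) = ∑ a, wt q a * (f a * g a) := by
  classical
  have hinv : Function.Involutive
      (fun p : (I → Bool) × (I → Bool) => (mg s p.1 p.2, mg s p.2 p.1)) := by
    intro p
    ext i <;> simp only [mg] <;> by_cases h : i ∈ s <;> simp [h]
  calc (∑ a, wt q a * f a) * (∑ a, wt q a * g a)
      = ∑ a, ∑ b, (wt q a * f a) * (wt q b * g b) := by rw [Finset.sum_mul_sum]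
    _ = ∑ p : (I → Bool) × (I → Bool), (wt q p.1 * f p.1) * (wt q p.2 * g p.2) := by
        rw [Fintype.sum_prod_type]
    _ = ∑ p : (I → Bool) × (I → Bool),
          (wt q (mg s p.1 p.2) * f (mg s p.1 p.2)) * (wt q (mg s p.2 p.1) * g (mg s p.2 p.1)) := by
        exact (Function.Bijective.sum_comp hinv.bijective
          (fun p => (wt q p.1 * f p.1) * (wt q p.2 * g p.2))).symm
    _ = ∑ p : (I → Bool) × (I → Bool), (wt q p.1 * wt q p.2) * (f p.1 * g p.1) := by
        refine Finset.sum_congr rfl fun p _ => ?_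
        have h1 : f (mg s p.1 p.2) = f p.1 := by
          refine hf _ _ fun i hi => ?_
          simp [mg, hi]
        have h2 : g (mg s p.2 p.1) = g p.1 := by
          refine hg _ _ fun i hi => ?_
          simp [mg, hi]
        have h3 : wt q (mg s p.1 p.2) * wt q (mg s p.2 p.1) = wt q p.1 * wt q p.2 := by
          unfold wt
          rw [← Finset.prod_mul_distrib, ← Finset.prod_mul_distrib]
          refine Finset.prod_congr rfl fun i _ => ?_
          by_cases h : i ∈ s <;> simp [mg, h, mul_comm]
        rw [h1, h2, ← h3]
        ring
    _ = ∑ a, ∑ b, (wt q a * wt q b) * (f a * g a) := by rw [Fintype.sum_prod_type]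
    _ = ∑ a, wt q a * (f a * g a) := by
        refine Finset.sum_congr rfl fun a _ => ?_
        have : ∑ b, (wt q a * wt q b) * (f a * g a)
            = (wt q a * (f a * g a)) * ∑ b, wt q b := by
          rw [Finset.mul_sum]
          exact Finset.sum_congr rfl fun b _ => by ring
        rw [this, hw1, mul_one]

end JansonAux
end part3

section part4
namespace JansonAux
variable {I : Type*} [Fintype I] [DecidableEq I] {q : I → Bool → ℝ}

lemma mem_UP {ω : Finset I} {a : I → Bool} : a ∈ UP ω ↔ ∀ i ∈ ω, a i = true := by
  simp [UP]

lemma mem_CF {S : Finset (Finset I)} {a : I → Bool} :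
    a ∈ CF S ↔ ∀ ω ∈ S, ¬ (∀ i ∈ ω, a i = true) := by
  simp only [CF, Finset.mem_filter, Finset.mem_univ, true_and]

lemma UP_upper {ω : Finset I} {a b : I → Bool} (hab : a ≤ b) (ha : a ∈ UP ω) : b ∈ UP ω := by
  rw [mem_UP] at ha ⊢
  intro i hi
  exact le_antisymm (Bool.le_true _) ((ha i hi) ▸ hab i)

lemma CF_lower {S : Finset (Finset I)} {a b : I → Bool} (hab : a ≤ b) (hb : b ∈ CF S) :
    a ∈ CF S := by
  rw [mem_CF] at hb ⊢
  intro ω hω ha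
  exact hb ω hω fun i hi => le_antisymm (Bool.le_true _) ((ha i hi) ▸ hab i)

lemma PP_prod (hw1 : ∑ a, wt q a = 1) (ω : Finset I) (T : Finset (Finset I))
    (hT : ∀ ω' ∈ T, ω ∩ ω' = ∅) :
    PP q (UP ω ∩ CF T) = PP q (UP ω) * PP q (CF T) := by
  classical
  have h := factor (q := q) ω (fun a => if a ∈ UP ω then 1 else 0)
    (fun a => if a ∈ CF T then 1 else 0) ?_ ?_ hw1
  · rw [← PP_eq_sum_ind, ← PP_eq_sum_ind] at h
    rw [h, PP_eq_sum_ind (UP ω ∩ CF T)]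
    refine Finset.sum_congr rfl fun a _ => ?_
    by_cases h1 : a ∈ UP ω <;> by_cases h2 : a ∈ CF T <;>
      simp [h1, h2, Finset.mem_inter]
  · intro a b hagree
    have : a ∈ UP ω ↔ b ∈ UP ω := by
      rw [mem_UP, mem_UP]
      exact forall₂_congr fun i hi => by rw [hagree i hi]
    simp [this]
  · intro a b hagree
    have : a ∈ CF T ↔ b ∈ CF T := by
      rw [mem_CF, mem_CF]
      refine forall₂_congr fun ω' hω' => not_congr ?_
      have : ∀ i ∈ ω', a i = b i := by
        intro i hi
        refine hagree i fun hiω => ?_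
        have : i ∈ ω ∩ ω' := Finset.mem_inter.2 ⟨hiω, hi⟩
        simp [hT ω' hω'] at this
      exact forall₂_congr fun i hi => by rw [this i hi]
    simp [this]

lemma PP_union_le (hq0 : ∀ i b, 0 ≤ q i b) (A : Finset (I → Bool)) (T : Finset (Finset I)) :
    PP q (A.filter (fun a => ∃ ω' ∈ T, a ∈ UP ω')) ≤ ∑ ω' ∈ T, PP q (A ∩ UP ω') := by
  classical
  calc PP q (A.filter (fun a => ∃ ω' ∈ T, a ∈ UP ω'))
      ≤ ∑ a ∈ A.filter (fun a => ∃ ω' ∈ T, a ∈ UP ω'),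
          ∑ ω' ∈ T, (if a ∈ UP ω' then wt q a else 0) := by
        refine Finset.sum_le_sum fun a ha => ?_
        obtain ⟨-, ω₀, hω₀, haω₀⟩ := Finset.mem_filter.1 ha
        have := Finset.single_le_sum (f := fun ω' => if a ∈ UP ω' then wt q a else 0)
          (fun ω' _ => by by_cases h : a ∈ UP ω' <;> simp [h, wt_nonneg hq0 a]) hω₀
        simpa [haω₀] using this
    _ = ∑ ω' ∈ T, ∑ a ∈ A.filter (fun a => ∃ ω'' ∈ T, a ∈ UP ω''),
          (if a ∈ UP ω' then wt q a else 0) := Finset.sum_comm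
    _ ≤ ∑ ω' ∈ T, PP q (A ∩ UP ω') := by
        refine Finset.sum_le_sum fun ω' _ => ?_
        rw [Finset.sum_ite_mem]
        refine PP_mono hq0 ?_
        intro a ha
        obtain ⟨ha1, ha2⟩ := Finset.mem_inter.1 ha
        exact Finset.mem_inter.2 ⟨(Finset.mem_filter.1 ha1).1, ha2⟩

lemma step_real {p δ Q' Q0 B : ℝ} (hp0 : 0 ≤ p) (hp : p ≤ 1/2) (hδ : 0 ≤ δ)
    (hQ'0 : 0 ≤ Q') (hQ : Q' ≤ Q0) (hB0 : 0 ≤ B) (hB : Q0 * (p - δ) ≤ B) :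
    Q' - B ≤ (1 - p) * Real.exp (2 * δ) * Q' := by
  have hexp : 1 + 2*δ ≤ Real.exp (2*δ) := by
    have := Real.add_one_le_exp (2*δ)
    linarith
  rcases le_total p δ with h | h
  · have h1 : (1:ℝ) ≤ (1 - p) * Real.exp (2*δ) := by nlinarith
    nlinarith
  · have h2 : Q' - B ≤ Q' * (1 - p + δ) := by nlinarith
    nlinarith [mul_le_mul_of_nonneg_left hexp (mul_nonneg hQ'0 (by linarith : (0:ℝ) ≤ 1-p)),
      mul_nonneg (mul_nonneg hQ'0 hδ) (by linarith : (0:ℝ) ≤ 1 - 2*p)]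

end JansonAux
end part4

section part5
namespace JansonAux
variable {I : Type*} [Fintype I] [DecidableEq I] {q : I → Bool → ℝ}

theorem janson_main (hq0 : ∀ i b, 0 ≤ q i b) (hw1 : ∑ a, wt q a = 1)
    (S : Finset (Finset I)) (hhalf : ∀ ω ∈ S, PP q (UP ω) ≤ 1/2) :
    PP q (CF S) ≤ (∏ ω ∈ S, (1 - PP q (UP ω))) *
      Real.exp (2 * ∑ p ∈ (S ×ˢ S).filter
          (fun p : Finset I × Finset I => p.1 ≠ p.2 ∧ (p.1 ∩ p.2).Nonempty),
        PP q (UP p.1 ∩ UP p.2)) := by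
  classical
  induction S using Finset.induction_on with
  | empty =>
    have h1 : CF (∅ : Finset (Finset I)) = Finset.univ := by
      ext a; simp [mem_CF]
    rw [h1]
    simp only [Finset.prod_empty, Finset.empty_product, Finset.filter_empty,
      Finset.sum_empty, mul_zero, Real.exp_zero, mul_one, one_mul]
    exact le_of_eq hw1
  | @insert ω S' hωS' ih =>
    have hhalf' : ∀ ω' ∈ S', PP q (UP ω') ≤ 1/2 :=
      fun ω' h => hhalf ω' (Finset.mem_insert_of_mem h)
    have hpω : PP q (UP ω) ≤ 1/2 := hhalf ω (Finset.mem_insert_self ω S')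
    have hpω0 : 0 ≤ PP q (UP ω) := PP_nonneg hq0 _
    set J1 := S'.filter (fun ω' => (ω ∩ ω').Nonempty) with hJ1
    set J0 := S'.filter (fun ω' => ¬ (ω ∩ ω').Nonempty) with hJ0
    set δ := ∑ ω' ∈ J1, PP q (UP ω ∩ UP ω') with hδdef
    have hδ0 : 0 ≤ δ := Finset.sum_nonneg fun _ _ => PP_nonneg hq0 _
    -- the new complement-intersection as a set difference
    have hCFins : CF (insert ω S') = CF S' \ UP ω := by
      ext a
      simp only [mem_CF, Finset.mem_sdiff, mem_UP, Finset.mem_insert]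
      constructor
      · intro h
        exact ⟨fun ω' h' => h ω' (Or.inr h'), h ω (Or.inl rfl)⟩
      · rintro ⟨h1, h2⟩ ω' (rfl | h')
        · exact h2
        · exact h1 ω' h'
    have hsplit : PP q (CF S' ∩ UP ω) + PP q (CF S' \ UP ω) = PP q (CF S') :=
      Finset.sum_inter_add_sum_sdiff _ _ _
    -- rewrite CF S' ∩ UP ω via J0 and J1
    set P : (I → Bool) → Prop := fun a => ∀ ω' ∈ J1, ¬ (∀ i ∈ ω', a i = true) with hP
    have hA_eq : CF S' ∩ UP ω = (UP ω ∩ CF J0).filter P := by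
      ext a
      constructor
      · intro h
        obtain ⟨h1, h2⟩ := Finset.mem_inter.1 h
        rw [mem_CF] at h1
        refine Finset.mem_filter.2 ⟨Finset.mem_inter.2 ⟨h2, ?_⟩, ?_⟩
        · rw [mem_CF]
          exact fun ω' h' => h1 ω' (Finset.mem_filter.1 h').1
        · exact fun ω' h' => h1 ω' (Finset.mem_filter.1 h').1
      · intro h
        obtain ⟨h12, hPa⟩ := Finset.mem_filter.1 h
        obtain ⟨h2, h0⟩ := Finset.mem_inter.1 h12
        rw [mem_CF] at h0
        refine Finset.mem_inter.2 ⟨?_, h2⟩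
        rw [mem_CF]
        intro ω' hω'
        by_cases hc : (ω ∩ ω').Nonempty
        · exact hPa ω' (Finset.mem_filter.2 ⟨hω', hc⟩)
        · exact h0 ω' (Finset.mem_filter.2 ⟨hω', hc⟩)
    have hfs : PP q ((UP ω ∩ CF J0).filter P) + PP q ((UP ω ∩ CF J0).filter (fun a => ¬ P a))
        = PP q (UP ω ∩ CF J0) :=
      Finset.sum_filter_add_sum_filter_not _ _ _
    -- union bound for the ¬P part
    have hnotP : ((UP ω ∩ CF J0).filter (fun a => ¬ P a))
        = ((UP ω ∩ CF J0).filter (fun a => ∃ ω' ∈ J1, a ∈ UP ω')) := by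
      ext a
      simp only [Finset.mem_filter, hP, mem_UP]
      push_neg
      rfl
    have hub : PP q ((UP ω ∩ CF J0).filter (fun a => ¬ P a)) ≤ δ * PP q (CF J0) := by
      rw [hnotP, hδdef, Finset.sum_mul]
      refine le_trans (PP_union_le hq0 _ _) (Finset.sum_le_sum fun ω' hω' => ?_)
      have heq : (UP ω ∩ CF J0) ∩ UP ω' = (UP ω ∩ UP ω') ∩ CF J0 := by
        ext a
        simp only [Finset.mem_inter]
        tauto
      rw [heq]
      refine harris hq0 hw1 _ _ ?_ ?_
      · intro a b hab ha
        obtain ⟨h1, h2⟩ := Finset.mem_inter.1 ha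
        exact Finset.mem_inter.2 ⟨UP_upper hab h1, UP_upper hab h2⟩
      · intro a b hab hb
        exact CF_lower hab hb
    -- product over disjoint supports
    have hprodJ0 : PP q (UP ω ∩ CF J0) = PP q (UP ω) * PP q (CF J0) := by
      refine PP_prod hw1 ω J0 fun ω' hω' => ?_
      exact Finset.not_nonempty_iff_eq_empty.1 (Finset.mem_filter.1 hω').2
    -- main quantities
    have hQle : PP q (CF S') ≤ PP q (CF J0) := by
      refine PP_mono hq0 fun a ha => ?_
      rw [mem_CF] at ha ⊢
      exact fun ω' h' => ha ω' (Finset.mem_filter.1 h').1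
    have hB0 : 0 ≤ PP q (CF S' ∩ UP ω) := PP_nonneg hq0 _
    have hBlow : PP q (CF J0) * (PP q (UP ω) - δ) ≤ PP q (CF S' ∩ UP ω) := by
      rw [hA_eq]
      have := hfs
      nlinarith [hub, hprodJ0]
    -- the one-step bound
    have hstep : PP q (CF (insert ω S')) ≤
        (1 - PP q (UP ω)) * Real.exp (2 * δ) * PP q (CF S') := by
      have h1 : PP q (CF (insert ω S')) = PP q (CF S') - PP q (CF S' ∩ UP ω) := by
        rw [hCFins]; linarith [hsplit]
      rw [h1]
      exact step_real hpω0 hpω hδ0 (PP_nonneg hq0 _) hQle hB0 hBlow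
    -- pair sums
    set t : Finset I × Finset I → ℝ := fun p => PP q (UP p.1 ∩ UP p.2) with ht
    set F' := (S' ×ˢ S').filter
      (fun p : Finset I × Finset I => p.1 ≠ p.2 ∧ (p.1 ∩ p.2).Nonempty) with hF'
    set Fins := ((insert ω S') ×ˢ (insert ω S')).filter
      (fun p : Finset I × Finset I => p.1 ≠ p.2 ∧ (p.1 ∩ p.2).Nonempty) with hFins
    have hpair : δ + ∑ p ∈ F', t p ≤ ∑ p ∈ Fins, t p := by
      have hE : ∑ p ∈ ({ω} ×ˢ J1 : Finset _), t p = δ := by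
        rw [Finset.sum_product, Finset.sum_singleton]
      have hdisj : Disjoint ({ω} ×ˢ J1 : Finset _) F' := by
        rw [Finset.disjoint_left]
        rintro ⟨a, b⟩ hab hab'
        obtain ⟨h1, -⟩ := Finset.mem_product.1 (Finset.mem_of_mem_filter _ hab')
        rw [Finset.mem_product, Finset.mem_singleton] at hab
        exact hωS' (hab.1 ▸ h1)
      have hsub : ({ω} ×ˢ J1 : Finset _) ∪ F' ⊆ Fins := by
        rintro ⟨a, b⟩ hab
        rcases Finset.mem_union.1 hab with h | h
        · rw [Finset.mem_product, Finset.mem_singleton] at h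
          obtain ⟨rfl, hb⟩ := h
          obtain ⟨hbS, hnon⟩ := Finset.mem_filter.1 hb
          refine Finset.mem_filter.2 ⟨Finset.mem_product.2
            ⟨Finset.mem_insert_self _ _, Finset.mem_insert_of_mem hbS⟩, ?_, hnon⟩
          intro hEq
          refine hωS' ?_
          rw [show a = b from hEq]
          exact hbS
        · obtain ⟨hmem, hcond⟩ := Finset.mem_filter.1 h
          obtain ⟨h1, h2⟩ := Finset.mem_product.1 hmem
          exact Finset.mem_filter.2 ⟨Finset.mem_product.2
            ⟨Finset.mem_insert_of_mem h1, Finset.mem_insert_of_mem h2⟩, hcond⟩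
      calc δ + ∑ p ∈ F', t p = ∑ p ∈ ({ω} ×ˢ J1 : Finset _) ∪ F', t p := by
            rw [Finset.sum_union hdisj, hE]
        _ ≤ ∑ p ∈ Fins, t p :=
            Finset.sum_le_sum_of_subset_of_nonneg hsub fun p _ _ => PP_nonneg hq0 _
    -- put everything together
    have hprod0 : 0 ≤ ∏ ω' ∈ S', (1 - PP q (UP ω')) :=
      Finset.prod_nonneg fun ω' h => by linarith [hhalf' ω' h]
    have hcoef0 : 0 ≤ (1 - PP q (UP ω)) * Real.exp (2 * δ) := by
      have := Real.exp_pos (2 * δ)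
      nlinarith
    calc PP q (CF (insert ω S'))
        ≤ (1 - PP q (UP ω)) * Real.exp (2 * δ) * PP q (CF S') := hstep
      _ ≤ (1 - PP q (UP ω)) * Real.exp (2 * δ) *
            ((∏ ω' ∈ S', (1 - PP q (UP ω'))) * Real.exp (2 * ∑ p ∈ F', t p)) :=
          mul_le_mul_of_nonneg_left (ih hhalf') hcoef0
      _ = (∏ ω' ∈ insert ω S', (1 - PP q (UP ω'))) *
            Real.exp (2 * (δ + ∑ p ∈ F', t p)) := by
          rw [Finset.prod_insert hωS',
            show (2:ℝ) * (δ + ∑ p ∈ F', t p) = 2*δ + 2*∑ p ∈ F', t p by ring, Real.exp_add]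
          ring
      _ ≤ (∏ ω' ∈ insert ω S', (1 - PP q (UP ω'))) *
            Real.exp (2 * ∑ p ∈ Fins, t p) := by
          refine mul_le_mul_of_nonneg_left (Real.exp_le_exp.2 (by linarith)) ?_
          rw [Finset.prod_insert hωS']
          exact mul_nonneg (by linarith) hprod0

end JansonAux
end part5


/-- Janson's second correlation inequality: if `(ξ_i)_{i ∈ I}` are independent `{0,1}`-valued
random variables, `S` is a finite family of nonempty subsets of `I`, `E_ω = {ξ_i = 1, ∀ i ∈ ω}`
and `P(E_ω) ≤ 1/2` for each `ω ∈ S`, then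
`P(⋂_{ω ∈ S} E_ωᶜ) ≤ (∏_{ω ∈ S} P(E_ωᶜ)) · exp(2 Σ P(E_ω ∩ E_ω'))`, the sum being over
ordered pairs `ω ≠ ω'` in `S` with `ω ∩ ω' ≠ ∅`. -/
theorem stmt_8 (I : Type*) [Fintype I] [DecidableEq I]
    (Ω : Type*) [MeasureSpace Ω] [IsProbabilityMeasure (ℙ : Measure Ω)]
    (ξ : I → Ω → Bool) (hmeas : ∀ i, Measurable (ξ i))
    (hindep : iIndepFun ξ ℙ)
    (S : Finset (Finset I)) (hne : ∀ ω ∈ S, ω.Nonempty)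
    (hhalf : ∀ ω ∈ S, (ℙ {x | ∀ i ∈ ω, ξ i x = true}).toReal ≤ 1 / 2) :
    (ℙ (⋂ ω ∈ S, {x | ∀ i ∈ ω, ξ i x = true}ᶜ)).toReal ≤
      (∏ ω ∈ S, (ℙ ({x | ∀ i ∈ ω, ξ i x = true}ᶜ)).toReal) *
        Real.exp (2 * ∑ p ∈ (S ×ˢ S).filter
            (fun p : Finset I × Finset I => p.1 ≠ p.2 ∧ (p.1 ∩ p.2).Nonempty),
          (ℙ ({x | ∀ i ∈ p.1, ξ i x = true} ∩ {x | ∀ i ∈ p.2, ξ i x = true})).toReal) := by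
  classical
  set X : Ω → (I → Bool) := fun x i => ξ i x with hX
  set q : I → Bool → ℝ := fun i b => (ℙ (ξ i ⁻¹' {b})).toReal with hq
  have hq0 : ∀ i b, 0 ≤ q i b := fun i b => ENNReal.toReal_nonneg
  have hcell : ∀ a : I → Bool, X ⁻¹' {a} = ⋂ i ∈ (Finset.univ : Finset I),
      ξ i ⁻¹' ({a i} : Set Bool) := by
    intro a
    ext x
    simp only [Set.mem_preimage, Set.mem_singleton_iff, Set.mem_iInter, Finset.mem_univ,
      true_implies, funext_iff]
    exact Iff.rfl
  have hcellmeas : ∀ a : I → Bool, MeasurableSet (X ⁻¹' {a}) := by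
    intro a
    rw [hcell]
    exact MeasurableSet.biInter (Set.to_countable _)
      (fun i _ => (hmeas i) (measurableSet_singleton _))
  have hwt : ∀ a : I → Bool, (ℙ (X ⁻¹' {a})).toReal = JansonAux.wt q a := by
    intro a
    rw [hcell, hindep.measure_inter_preimage_eq_mul Finset.univ
      (fun i _ => measurableSet_singleton _), ENNReal.toReal_prod]
    rfl
  have hbridge : ∀ A : Finset (I → Bool), (ℙ (X ⁻¹' ↑A)).toReal = JansonAux.PP q A := by
    intro A
    have hdecomp : X ⁻¹' ↑A = ⋃ a ∈ A, X ⁻¹' {a} := by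
      ext x
      simp [Set.mem_iUnion]
    have hdis : (↑A : Set (I → Bool)).PairwiseDisjoint (fun a => X ⁻¹' {a}) := by
      intro a _ b _ hab
      simp only [Function.onFun, Set.disjoint_left]
      intro x hxa hxb
      exact hab ((Set.mem_singleton_iff.1 hxa).symm.trans (Set.mem_singleton_iff.1 hxb))
    rw [hdecomp, measure_biUnion_finset hdis (fun a _ => hcellmeas a),
      ENNReal.toReal_sum (fun a _ => measure_ne_top _ _)]
    exact Finset.sum_congr rfl fun a _ => hwt a
  have hw1 : ∑ a, JansonAux.wt q a = 1 := by
    have h := hbridge Finset.univ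
    rw [Finset.coe_univ, Set.preimage_univ, measure_univ] at h
    simpa [JansonAux.PP] using h.symm
  -- event identifications
  have hEω : ∀ ω : Finset I, {x | ∀ i ∈ ω, ξ i x = true} = X ⁻¹' ↑(JansonAux.UP ω) := by
    intro ω
    ext x
    simp only [Set.mem_setOf_eq, Set.mem_preimage, Finset.mem_coe, JansonAux.mem_UP]
    exact Iff.rfl
  have hPEω : ∀ ω : Finset I, (ℙ {x | ∀ i ∈ ω, ξ i x = true}).toReal
      = JansonAux.PP q (JansonAux.UP ω) := by
    intro ω
    rw [hEω ω, hbridge]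
  have hPcompl : ∀ ω : Finset I, (ℙ ({x | ∀ i ∈ ω, ξ i x = true}ᶜ)).toReal
      = 1 - JansonAux.PP q (JansonAux.UP ω) := by
    intro ω
    have h1 : {x | ∀ i ∈ ω, ξ i x = true}ᶜ
        = X ⁻¹' ↑((Finset.univ : Finset (I → Bool)) \ JansonAux.UP ω) := by
      rw [hEω ω]
      ext x
      simp only [Set.mem_compl_iff, Set.mem_preimage, Finset.mem_coe, Finset.mem_sdiff,
        Finset.mem_univ, true_and]
    rw [h1, hbridge]
    unfold JansonAux.PP
    rw [Finset.sum_sdiff_eq_sub (Finset.subset_univ _), hw1]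
  have hLHS : (⋂ ω ∈ S, {x | ∀ i ∈ ω, ξ i x = true}ᶜ) = X ⁻¹' ↑(JansonAux.CF S) := by
    ext x
    simp only [Set.mem_iInter, Set.mem_compl_iff, Set.mem_setOf_eq, Set.mem_preimage,
      Finset.mem_coe, JansonAux.mem_CF]
    exact Iff.rfl
  have hpairs : ∀ p : Finset I × Finset I,
      (ℙ ({x | ∀ i ∈ p.1, ξ i x = true} ∩ {x | ∀ i ∈ p.2, ξ i x = true})).toReal
        = JansonAux.PP q (JansonAux.UP p.1 ∩ JansonAux.UP p.2) := by
    intro p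
    rw [← hbridge]
    congr 1
    rw [hEω p.1, hEω p.2, Finset.coe_inter, Set.preimage_inter]
  rw [hLHS, hbridge]
  calc JansonAux.PP q (JansonAux.CF S)
      ≤ (∏ ω ∈ S, (1 - JansonAux.PP q (JansonAux.UP ω))) *
        Real.exp (2 * ∑ p ∈ (S ×ˢ S).filter
            (fun p : Finset I × Finset I => p.1 ≠ p.2 ∧ (p.1 ∩ p.2).Nonempty),
          JansonAux.PP q (JansonAux.UP p.1 ∩ JansonAux.UP p.2)) :=
        JansonAux.janson_main hq0 hw1 S (fun ω hω => by rw [← hPEω ω]; exact hhalf ω hω)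
    _ = _ := by
        congr 1
        · exact Finset.prod_congr rfl fun ω _ => (hPcompl ω).symm
        · congr 1
          congr 1
          exact Finset.sum_congr rfl fun p _ => (hpairs p).symm
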